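/- Let d ≥ 1, μ > 1, and let Q : ℝ → Matrix (Fin d) (Fin d) ℝ be a continuous map taking values in symmetric matrices and satisfying ‖Q(t)‖ ≤ C (1 + |t|)^{-μ-2} for all t, for some constant C > 0. Then there exists t₀ < 0 such that the matrix Riccati initial value problem M'(t) + M(t)² + Q(t) = 0, M(t₀) = (1/t₀)·I_d, has a unique C¹ solution M defined on all of (−∞, t₀], taking values in symmetric matrices; moreover there is a constant C' such that ‖M(t) − (1/t)·I_d‖ ≤ C'/t² for all t ≤ t₀. -/

import Mathlib

attribute [local instance] Matrix.normedAddCommGroup Matrix.normedSpace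

open Set Real intervalIntegral MeasureTheory Matrix

private lemma mat_norm_mul_le {d : ℕ} (A B : Matrix (Fin d) (Fin d) ℝ) :
    ‖A * B‖ ≤ d * ‖A‖ * ‖B‖ := by
  rw [Matrix.norm_le_iff (by positivity)]
  intro i j
  calc ‖(A * B) i j‖ = ‖∑ k, A i k * B k j‖ := by rw [Matrix.mul_apply]
    _ ≤ ∑ k, ‖A i k * B k j‖ := norm_sum_le _ _
    _ ≤ ∑ _k : Fin d, ‖A‖ * ‖B‖ := Finset.sum_le_sum (fun k _ => by
        rw [norm_mul]
        exact mul_le_mul (Matrix.norm_entry_le_entrywise_sup_norm A)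
          (Matrix.norm_entry_le_entrywise_sup_norm B) (norm_nonneg _) (norm_nonneg _))
    _ = d * ‖A‖ * ‖B‖ := by
        simp [Finset.sum_const, Finset.card_univ, mul_assoc]

private lemma mat_sq_diff {d : ℕ} (A B : Matrix (Fin d) (Fin d) ℝ) :
    ‖A * A - B * B‖ ≤ d * ‖A‖ * ‖A - B‖ + d * ‖A - B‖ * ‖B‖ := by
  have h : A * A - B * B = A * (A - B) + (A - B) * B := by noncomm_ring
  rw [h]
  exact (norm_add_le _ _).trans (add_le_add (mat_norm_mul_le _ _) (mat_norm_mul_le _ _))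

private lemma exists_t0 (d : ℕ) (hd : 1 ≤ d) (μ C : ℝ) (hμ : 1 < μ) (hC : 0 < C) :
    ∃ t₀ : ℝ, t₀ < 0 ∧ (d : ℝ) * (-t₀)⁻¹ ≤ 1/4 ∧
      C * (1 - t₀) ^ (1 - μ) / (μ - 1) ≤ 1/2 := by
  set A : ℝ := (2 * C / (μ - 1)) ^ ((μ - 1)⁻¹) with hA
  have hμ0 : 0 < μ - 1 := by linarith
  have hbase : 0 < 2 * C / (μ - 1) := by positivity
  have hApos : 0 < A := Real.rpow_pos_of_pos hbase _
  have hd' : (1:ℝ) ≤ d := by exact_mod_cast hd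
  refine ⟨-(4 * d + A), ?_, ?_, ?_⟩
  · have : (0:ℝ) < 4 * d + A := by positivity
    linarith
  · rw [neg_neg]
    have h4d : (0:ℝ) < 4 * (d:ℝ) := by positivity
    have hle : ((4:ℝ) * (d:ℝ) + A)⁻¹ ≤ (4 * (d:ℝ))⁻¹ := by
      apply inv_anti₀ h4d; linarith
    calc (d:ℝ) * (4 * (d:ℝ) + A)⁻¹ ≤ (d:ℝ) * (4 * (d:ℝ))⁻¹ := by
          apply mul_le_mul_of_nonneg_left hle (by positivity)
      _ = 1/4 := by
          have : (d:ℝ) ≠ 0 := by linarith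
          field_simp
  · have h1 : A ≤ 1 - -(4 * d + A) := by
      have : (0:ℝ) ≤ 4 * d := by positivity
      linarith
    have h2 : (1 - -(4 * d + A)) ^ (1 - μ) ≤ A ^ (1 - μ) :=
      Real.rpow_le_rpow_of_nonpos hApos h1 (by linarith)
    have h3 : A ^ (1 - μ) = (μ - 1) / (2 * C) := by
      rw [hA, ← Real.rpow_mul hbase.le]
      have : (μ - 1)⁻¹ * (1 - μ) = -1 := by field_simp; ring
      rw [this, Real.rpow_neg_one, inv_div]
    have hCpos : 0 < 2 * C := by linarith
    calc C * (1 - -(4 * d + A)) ^ (1 - μ) / (μ - 1)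
        ≤ C * ((μ - 1) / (2 * C)) / (μ - 1) := by
          gcongr
          rw [← h3]
          exact h2
      _ = 1/2 := by field_simp

private lemma intInvSq (a t₀ : ℝ) (ha : a ≤ t₀) (ht₀ : t₀ < 0) :
    IntervalIntegrable (fun s : ℝ => (s^2)⁻¹) volume a t₀ ∧
    (∫ s in a..t₀, (s^2)⁻¹) ≤ -t₀⁻¹ := by
  have huIcc : uIcc a t₀ = Icc a t₀ := uIcc_of_le ha
  have hne : ∀ s ∈ uIcc a t₀, s ≠ 0 := by
    rw [huIcc]; intro s hs; exact ne_of_lt (lt_of_le_of_lt hs.2 ht₀)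
  have hcont : ContinuousOn (fun s : ℝ => (s^2)⁻¹) (uIcc a t₀) := by
    apply ContinuousOn.inv₀ (continuousOn_pow 2)
    intro s hs; exact pow_ne_zero 2 (hne s hs)
  have hint : IntervalIntegrable (fun s : ℝ => (s^2)⁻¹) volume a t₀ :=
    hcont.intervalIntegrable
  refine ⟨hint, ?_⟩
  have heq : ∀ s ∈ uIcc a t₀, (s^2)⁻¹ = s ^ (-2 : ℤ) := by
    intro s hs; rw [_root_.zpow_neg]; norm_cast
  rw [integral_congr heq, integral_zpow (Or.inr ⟨by norm_num, by
    rw [huIcc]; intro h0; exact absurd h0.2 (by linarith)⟩)]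
  have h1 : a⁻¹ ≤ 0 := inv_nonpos.mpr (by linarith)
  have : ((-2 : ℤ) : ℝ) + 1 = -1 := by norm_num
  rw [this]
  have h2 : t₀ ^ ((-2:ℤ) + 1) = t₀⁻¹ := by norm_num
  have h3 : a ^ ((-2:ℤ) + 1) = a⁻¹ := by norm_num
  rw [h2, h3]
  have : (t₀⁻¹ - a⁻¹) / (-1 : ℝ) = a⁻¹ - t₀⁻¹ := by ring
  rw [this]; linarith

private lemma intDecay (a t₀ μ : ℝ) (ha : a ≤ t₀) (ht₀ : t₀ < 0) (hμ : 1 < μ) :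
    IntervalIntegrable (fun s : ℝ => (1-s) ^ (-μ)) volume a t₀ ∧
    (∫ s in a..t₀, (1-s) ^ (-μ)) ≤ (1 - t₀) ^ (1 - μ) / (μ - 1) := by
  have hpos : ∀ s ∈ uIcc a t₀, 0 < 1 - s := by
    rw [uIcc_of_le ha]; intro s hs; have := hs.2; linarith
  have hcont : ContinuousOn (fun s : ℝ => (1-s) ^ (-μ)) (uIcc a t₀) := by
    apply ContinuousOn.rpow_const (by fun_prop)
    intro s hs; exact Or.inl (ne_of_gt (hpos s hs))
  refine ⟨hcont.intervalIntegrable, ?_⟩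
  have hps : (∫ s in a..t₀, (1-s) ^ (-μ)) = ∫ u in (1-t₀)..(1-a), u ^ (-μ) := by
    rw [← integral_comp_sub_left (fun u : ℝ => u ^ (-μ)) 1]
  rw [hps, integral_rpow (Or.inr ⟨by linarith, by
      rw [uIcc_of_le (by linarith : (1:ℝ) - t₀ ≤ 1 - a)]
      intro h0; have := h0.1; linarith⟩)]
  have h1a : (0:ℝ) ≤ (1-a) ^ (-μ + 1) := Real.rpow_nonneg (by linarith) _
  have hμ1 : -μ + 1 = 1 - μ := by ring
  rw [hμ1]
  have hne : (1:ℝ) - μ ≠ 0 := by linarith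
  have hkey : ((1-a) ^ (1-μ) - (1-t₀) ^ (1-μ)) / (1 - μ)
      = ((1-t₀) ^ (1-μ) - (1-a) ^ (1-μ)) / (μ - 1) := by
    rw [div_eq_div_iff hne (by linarith : μ - 1 ≠ 0)]
    ring
  rw [hkey]
  rw [hμ1] at h1a
  gcongr
  · linarith

private lemma exists_S (d : ℕ) (hd : 1 ≤ d) (μ C : ℝ) (hμ : 1 < μ) (hC : 0 < C)
    (Q : ℝ → Matrix (Fin d) (Fin d) ℝ) (hQc : Continuous Q)
    (hQsym : ∀ t, (Q t).IsSymm)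
    (hQbound : ∀ t : ℝ, ‖Q t‖ ≤ C * (1 + |t|) ^ (-μ - 2))
    (t₀ : ℝ) (ht₀ : t₀ < 0) (h14 : (d : ℝ) * (-t₀)⁻¹ ≤ 1/4)
    (hhalf : C * (1 - t₀) ^ (1 - μ) / (μ - 1) ≤ 1/2) :
    ∃ S : ℝ → Matrix (Fin d) (Fin d) ℝ, Continuous S ∧ (∀ t, ‖S t‖ ≤ 1) ∧
      (∀ t, (S t).IsSymm) ∧
      ∀ t, S t = ∫ s in (min t t₀)..t₀,
        (((min s t₀)^2)⁻¹ • (S s * S s) + s^2 • Q s) := by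
  classical
  -- the vector field
  set g : BoundedContinuousFunction ℝ (Matrix (Fin d) (Fin d) ℝ) → ℝ → Matrix (Fin d) (Fin d) ℝ := fun S s => ((min s t₀)^2)⁻¹ • (S s * S s) + s^2 • Q s with hg
  have hminne : ∀ s : ℝ, ((min s t₀)^2) ≠ 0 := fun s =>
    pow_ne_zero 2 (ne_of_lt (lt_of_le_of_lt (min_le_right s t₀) ht₀))
  have hgcont : ∀ S : BoundedContinuousFunction ℝ (Matrix (Fin d) (Fin d) ℝ), Continuous (g S) := by
    intro S
    apply Continuous.add
    · exact (((continuous_id.min continuous_const).pow 2).inv₀ hminne).smul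
        (S.continuous.matrix_mul S.continuous)
    · exact (continuous_pow 2).smul hQc
  have hgint := fun (S : BoundedContinuousFunction ℝ (Matrix (Fin d) (Fin d) ℝ)) (a b : ℝ) =>
    (hgcont S).intervalIntegrable (μ := volume) a b
  -- pointwise bound
  have hgbound : ∀ S : BoundedContinuousFunction ℝ (Matrix (Fin d) (Fin d) ℝ), (∀ u, ‖S u‖ ≤ 1) → ∀ s ∈ Iic t₀,
      ‖g S s‖ ≤ (d : ℝ) * (s^2)⁻¹ + C * (1-s) ^ (-μ) := by
    intro S hS s hs
    rw [mem_Iic] at hs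
    have hms : min s t₀ = s := min_eq_left hs
    have hsneg : s < 0 := lt_of_le_of_lt hs ht₀
    have h1 : ‖((min s t₀)^2)⁻¹ • (S s * S s)‖ ≤ (d : ℝ) * (s^2)⁻¹ := by
      rw [hms, norm_smul, Real.norm_eq_abs, abs_of_nonneg (by positivity)]
      calc (s^2)⁻¹ * ‖S s * S s‖ ≤ (s^2)⁻¹ * ((d : ℝ) * ‖S s‖ * ‖S s‖) :=
            mul_le_mul_of_nonneg_left (mat_norm_mul_le _ _) (by positivity)
        _ ≤ (s^2)⁻¹ * ((d : ℝ) * 1 * 1) := by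
            apply mul_le_mul_of_nonneg_left _ (by positivity)
            have h0 := norm_nonneg (S s)
            have h1 := hS s
            have h2 : (0:ℝ) ≤ (d:ℝ) := Nat.cast_nonneg d
            nlinarith [mul_le_mul h1 h1 h0 (zero_le_one), mul_le_mul_of_nonneg_left (mul_le_mul h1 h1 h0 (zero_le_one)) h2]
        _ = (d : ℝ) * (s^2)⁻¹ := by ring
    have h2 : ‖s^2 • Q s‖ ≤ C * (1-s) ^ (-μ) := by
      rw [norm_smul, Real.norm_eq_abs, abs_of_nonneg (sq_nonneg s)]
      have habs : 1 + |s| = 1 - s := by rw [abs_of_neg hsneg]; ring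
      calc s^2 * ‖Q s‖ ≤ s^2 * (C * (1-s) ^ (-μ-2)) := by
            apply mul_le_mul_of_nonneg_left _ (sq_nonneg s)
            have := hQbound s; rwa [habs] at this
        _ ≤ (1-s)^2 * (C * (1-s) ^ (-μ-2)) := by
            apply mul_le_mul_of_nonneg_right _
              (mul_nonneg hC.le (Real.rpow_nonneg (by linarith) _))
            nlinarith
        _ = C * (1-s) ^ (-μ) := by
            have hpos : (0:ℝ) < 1 - s := by linarith
            rw [← Real.rpow_natCast (1-s) 2]
            calc ((1-s) ^ ((2:ℕ):ℝ)) * (C * (1-s) ^ (-μ-2))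
                = C * ((1-s) ^ ((2:ℕ):ℝ) * (1-s) ^ (-μ-2)) := by ring
              _ = C * (1-s) ^ (((2:ℕ):ℝ) + (-μ-2)) := by rw [← Real.rpow_add hpos]
              _ = C * (1-s) ^ (-μ) := by norm_num
    calc ‖g S s‖ ≤ ‖((min s t₀)^2)⁻¹ • (S s * S s)‖ + ‖s^2 • Q s‖ := norm_add_le _ _
      _ ≤ (d : ℝ) * (s^2)⁻¹ + C * (1-s) ^ (-μ) := add_le_add h1 h2
  -- integral norm bound
  have keybound : ∀ S : BoundedContinuousFunction ℝ (Matrix (Fin d) (Fin d) ℝ),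
      (∀ u, ‖S u‖ ≤ 1) → ∀ t : ℝ,
      ‖∫ s in (min t t₀)..t₀, g S s‖ ≤ 3/4 := by
    intro S hS t
    have ha : min t t₀ ≤ t₀ := min_le_right t t₀
    set a := min t t₀ with ha'
    have h1 := intInvSq a t₀ ha ht₀
    have h2 := intDecay a t₀ μ ha ht₀ hμ
    have hmaj : IntervalIntegrable (fun s => (d:ℝ) * (s^2)⁻¹ + C * (1-s) ^ (-μ)) volume a t₀ :=
      (h1.1.const_mul _).add (h2.1.const_mul _)
    calc ‖∫ s in a..t₀, g S s‖ ≤ ∫ s in a..t₀, ‖g S s‖ := norm_integral_le_integral_norm ha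
      _ ≤ ∫ s in a..t₀, ((d:ℝ) * (s^2)⁻¹ + C * (1-s) ^ (-μ)) := by
          apply integral_mono_on ha ((hgcont S).norm.intervalIntegrable a t₀) hmaj
          intro s hs
          exact hgbound S hS s (mem_Iic.mpr hs.2)
      _ = (d:ℝ) * (∫ s in a..t₀, (s^2)⁻¹) + C * (∫ s in a..t₀, (1-s) ^ (-μ)) := by
          rw [integral_add (h1.1.const_mul _) (h2.1.const_mul _),
            intervalIntegral.integral_const_mul, intervalIntegral.integral_const_mul]
      _ ≤ (d:ℝ) * (-t₀⁻¹) + C * ((1-t₀) ^ (1-μ)/(μ-1)) :=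
          add_le_add (mul_le_mul_of_nonneg_left h1.2 (Nat.cast_nonneg d))
            (mul_le_mul_of_nonneg_left h2.2 hC.le)
      _ ≤ 1/4 + 1/2 := by
          apply add_le_add
          · rw [inv_neg] at h14; exact h14
          · rw [← mul_div_assoc]; exact hhalf
      _ ≤ 3/4 := by norm_num
  -- Lipschitz estimate
  have keylip : ∀ S₁ S₂ : BoundedContinuousFunction ℝ (Matrix (Fin d) (Fin d) ℝ),
      (∀ u, ‖S₁ u‖ ≤ 1) → (∀ u, ‖S₂ u‖ ≤ 1) → ∀ t : ℝ,
      ‖(∫ s in (min t t₀)..t₀, g S₁ s) - ∫ s in (min t t₀)..t₀, g S₂ s‖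
        ≤ 1/2 * dist S₁ S₂ := by
    intro S₁ S₂ h₁ h₂ t
    have ha : min t t₀ ≤ t₀ := min_le_right t t₀
    set a := min t t₀ with ha'
    set δ := dist S₁ S₂ with hδ
    have hδ0 : 0 ≤ δ := dist_nonneg
    have hdiff : ∀ s ∈ Icc a t₀, ‖g S₁ s - g S₂ s‖ ≤ (2*(d:ℝ)*δ) * (s^2)⁻¹ := by
      intro s hs
      have hms : min s t₀ = s := min_eq_left hs.2
      have hgd : g S₁ s - g S₂ s = ((min s t₀)^2)⁻¹ • (S₁ s * S₁ s - S₂ s * S₂ s) := by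
        simp only [hg]; rw [smul_sub]; abel
      rw [hgd, hms, norm_smul, Real.norm_eq_abs, abs_of_nonneg (by positivity)]
      have hd1 : ‖S₁ s - S₂ s‖ ≤ δ := by
        rw [← dist_eq_norm]; exact BoundedContinuousFunction.dist_coe_le_dist s
      have hsq := mat_sq_diff (S₁ s) (S₂ s)
      have hnn := norm_nonneg (S₁ s - S₂ s)
      have hd0 : (0:ℝ) ≤ d := Nat.cast_nonneg d
      calc (s^2)⁻¹ * ‖S₁ s * S₁ s - S₂ s * S₂ s‖
          ≤ (s^2)⁻¹ * ((d:ℝ)*‖S₁ s‖*‖S₁ s - S₂ s‖ + (d:ℝ)*‖S₁ s - S₂ s‖*‖S₂ s‖) :=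
            mul_le_mul_of_nonneg_left hsq (by positivity)
        _ ≤ (s^2)⁻¹ * ((d:ℝ)*1*δ + (d:ℝ)*δ*1) := by
            apply mul_le_mul_of_nonneg_left _ (by positivity)
            have e1 := norm_nonneg (S₁ s)
            have e2 := norm_nonneg (S₂ s)
            nlinarith [h₁ s, h₂ s, mul_le_mul (h₁ s) hd1 hnn zero_le_one,
              mul_le_mul hd1 (h₂ s) (norm_nonneg (S₂ s)) hδ0]
        _ = (2*(d:ℝ)*δ) * (s^2)⁻¹ := by ring
    have h1 := intInvSq a t₀ ha ht₀
    calc ‖(∫ s in a..t₀, g S₁ s) - ∫ s in a..t₀, g S₂ s‖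
        = ‖∫ s in a..t₀, (g S₁ s - g S₂ s)‖ := by
          rw [integral_sub (hgint S₁ a t₀) (hgint S₂ a t₀)]
      _ ≤ ∫ s in a..t₀, ‖g S₁ s - g S₂ s‖ := norm_integral_le_integral_norm ha
      _ ≤ ∫ s in a..t₀, (2*(d:ℝ)*δ) * (s^2)⁻¹ := by
          apply integral_mono_on ha (((hgcont S₁).sub (hgcont S₂)).norm.intervalIntegrable a t₀)
            (h1.1.const_mul _) hdiff
      _ = (2*(d:ℝ)*δ) * ∫ s in a..t₀, (s^2)⁻¹ := integral_const_mul _ _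
      _ ≤ (2*(d:ℝ)*δ) * (-t₀⁻¹) := by
          apply mul_le_mul_of_nonneg_left h1.2 (by positivity)
      _ = 2*δ*((d:ℝ)*(-t₀)⁻¹) := by rw [inv_neg]; ring
      _ ≤ 2*δ*(1/4) := mul_le_mul_of_nonneg_left h14 (by positivity)
      _ = 1/2 * δ := by ring
  -- symmetry is preserved
  have keysym : ∀ S : BoundedContinuousFunction ℝ (Matrix (Fin d) (Fin d) ℝ),
      (∀ u, (S u).IsSymm) → ∀ t : ℝ, (∫ s in (min t t₀)..t₀, g S s).IsSymm := by
    intro S hSsym t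
    have hsym : ∀ s, (g S s).IsSymm := by
      intro s
      apply Matrix.IsSymm.add
      · apply Matrix.IsSymm.smul
        unfold Matrix.IsSymm
        rw [Matrix.transpose_mul, hSsym s]
      · exact (hQsym s).smul _
    set L : Matrix (Fin d) (Fin d) ℝ →L[ℝ] Matrix (Fin d) (Fin d) ℝ :=
      LinearMap.toContinuousLinearMap
        ((Matrix.transposeLinearEquiv (Fin d) (Fin d) ℝ ℝ).toLinearMap) with hL
    have hcomm := L.intervalIntegral_comp_comm (hgint S (min t t₀) t₀)
    have hLA : ∀ A : Matrix (Fin d) (Fin d) ℝ, L A = Aᵀ := fun A => rfl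
    unfold Matrix.IsSymm
    calc (∫ s in (min t t₀)..t₀, g S s)ᵀ
        = L (∫ s in (min t t₀)..t₀, g S s) := (hLA _).symm
      _ = ∫ s in (min t t₀)..t₀, L (g S s) := hcomm.symm
      _ = ∫ s in (min t t₀)..t₀, g S s := by
          refine integral_congr fun s _ => ?_
          rw [hLA]; exact hsym s
  -- continuity of the integral map
  have hΦcont : ∀ S : BoundedContinuousFunction ℝ (Matrix (Fin d) (Fin d) ℝ),
      Continuous (fun t => ∫ s in (min t t₀)..t₀, g S s) := by
    intro S
    have hP : Continuous (fun b => ∫ s in t₀..b, g S s) :=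
      intervalIntegral.continuous_primitive (hgint S) t₀
    have hrw : (fun t => ∫ s in (min t t₀)..t₀, g S s)
        = fun t => -(∫ s in t₀..(min t t₀), g S s) := by
      funext t; rw [← integral_symm]
    rw [hrw]
    exact (hP.comp (continuous_id.min continuous_const)).neg
  -- the closed subset
  set 𝒮 : Set (BoundedContinuousFunction ℝ (Matrix (Fin d) (Fin d) ℝ)) :=
    {S | (∀ u, ‖S u‖ ≤ 1) ∧ ∀ u, (S u).IsSymm} with h𝒮
  have hclosed : IsClosed 𝒮 := by
    have hre : 𝒮 = (⋂ u : ℝ, {S : BoundedContinuousFunction ℝ (Matrix (Fin d) (Fin d) ℝ) | ‖S u‖ ≤ 1})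
        ∩ ⋂ u : ℝ, {S : BoundedContinuousFunction ℝ (Matrix (Fin d) (Fin d) ℝ) | (S u).IsSymm} := by
      ext S; simp only [h𝒮, Set.mem_setOf_eq, Set.mem_inter_iff, Set.mem_iInter]
    rw [hre]
    apply IsClosed.inter
    · exact isClosed_iInter fun u => isClosed_le
        (continuous_norm.comp (BoundedContinuousFunction.lipschitz_eval_const u).continuous) continuous_const
    · refine isClosed_iInter fun u => ?_
      exact isClosed_eq
        ((BoundedContinuousFunction.lipschitz_eval_const u).continuous.matrix_transpose)
        (BoundedContinuousFunction.lipschitz_eval_const u).continuous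
  haveI : CompleteSpace ↥𝒮 := hclosed.completeSpace_coe
  haveI : Nonempty ↥𝒮 := ⟨⟨0, fun u => by simp, fun u => by simp [Matrix.isSymm_zero]⟩⟩
  -- the contraction map
  set Φ : ↥𝒮 → ↥𝒮 := fun S => ⟨BoundedContinuousFunction.ofNormedAddCommGroup
      (fun t => ∫ s in (min t t₀)..t₀, g S.1 s) (hΦcont S.1) 1
      (fun t => le_trans (keybound S.1 S.2.1 t) (by norm_num)),
    fun u => le_trans (keybound S.1 S.2.1 u) (by norm_num),
    fun u => keysym S.1 S.2.2 u⟩ with hΦ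
  have hcontract : ContractingWith (1/2 : NNReal) Φ := by
    constructor
    · rw [← NNReal.coe_lt_coe]; norm_num
    · apply LipschitzWith.of_dist_le_mul
      intro S₁ S₂
      rw [Subtype.dist_eq, BoundedContinuousFunction.dist_le (by positivity)]
      intro t
      rw [dist_eq_norm]
      have hk := keylip S₁.1 S₂.1 S₁.2.1 S₂.2.1 t
      have hd : dist S₁ S₂ = dist S₁.1 S₂.1 := Subtype.dist_eq S₁ S₂
      simp only [hΦ, BoundedContinuousFunction.coe_ofNormedAddCommGroup]
      rw [hd]
      have hc : ((1/2 : NNReal) : ℝ) = 1/2 := by norm_num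
      rw [hc]
      exact hk
  -- extract the fixed point
  set Sfix := hcontract.fixedPoint Φ with hSfix
  have hfix : Φ Sfix = Sfix := hcontract.fixedPoint_isFixedPt
  have heq : ∀ t : ℝ, Sfix.1 t = ∫ s in (min t t₀)..t₀, g Sfix.1 s := by
    intro t
    conv_lhs => rw [← hfix]
    simp only [hΦ, BoundedContinuousFunction.coe_ofNormedAddCommGroup]
    rfl
  exact ⟨fun t => Sfix.1 t, Sfix.1.continuous, Sfix.2.1, Sfix.2.2, fun t => heq t⟩

private lemma riccati_unique (d : ℕ) (Q : ℝ → Matrix (Fin d) (Fin d) ℝ) (t₀ : ℝ)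
    (M N : ℝ → Matrix (Fin d) (Fin d) ℝ)
    (hM : ∀ t ∈ Iic t₀, HasDerivWithinAt M (-(M t * M t + Q t)) (Iic t₀) t)
    (hN : ∀ t ∈ Iic t₀, HasDerivWithinAt N (-(N t * N t + Q t)) (Iic t₀) t)
    (hinit : N t₀ = M t₀) : ∀ t ∈ Iic t₀, N t = M t := by
  intro t ht
  rw [mem_Iic] at ht
  rcases eq_or_lt_of_le ht with he | hlt
  · rw [he]; exact hinit
  · have hMc : ContinuousOn M (Icc t t₀) := fun x hx =>
      ((hM x hx.2).continuousWithinAt).mono Icc_subset_Iic_self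
    have hNc : ContinuousOn N (Icc t t₀) := fun x hx =>
      ((hN x hx.2).continuousWithinAt).mono Icc_subset_Iic_self
    obtain ⟨cM, hcM⟩ := isCompact_Icc.exists_bound_of_continuousOn hMc
    obtain ⟨cN, hcN⟩ := isCompact_Icc.exists_bound_of_continuousOn hNc
    set ρ : ℝ := max (max cM cN) 0 with hρ
    have hρ0 : (0:ℝ) ≤ ρ := le_max_right _ _
    have hd0 : (0:ℝ) ≤ d := Nat.cast_nonneg d
    set K : NNReal := ⟨2*d*ρ, by positivity⟩ with hK
    set v : ℝ → Matrix (Fin d) (Fin d) ℝ → Matrix (Fin d) (Fin d) ℝ :=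
      fun τ X => -(X * X + Q τ) with hv
    have hlip : ∀ τ : ℝ, LipschitzOnWith K (v τ) (Metric.closedBall 0 ρ) := by
      intro τ
      apply LipschitzOnWith.of_dist_le_mul
      intro X hX Y hY
      rw [mem_closedBall_zero_iff] at hX hY
      have h1 : dist (v τ X) (v τ Y) = ‖Y * Y - X * X‖ := by
        rw [dist_eq_norm]
        have : v τ X - v τ Y = Y * Y - X * X := by simp only [hv]; abel
        rw [this]
      rw [h1]
      have h2 := mat_sq_diff Y X
      have h3 : ‖Y - X‖ = dist X Y := by rw [dist_comm, dist_eq_norm]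
      have hYX := norm_nonneg (Y - X)
      calc ‖Y * Y - X * X‖ ≤ (d:ℝ) * ‖Y‖ * ‖Y - X‖ + (d:ℝ) * ‖Y - X‖ * ‖X‖ := h2
        _ ≤ (d:ℝ) * ρ * ‖Y - X‖ + (d:ℝ) * ‖Y - X‖ * ρ := by
            apply add_le_add
            · apply mul_le_mul_of_nonneg_right _ hYX
              exact mul_le_mul_of_nonneg_left hY hd0
            · exact mul_le_mul_of_nonneg_left hX (by positivity)
        _ = (2*(d:ℝ)*ρ) * ‖Y - X‖ := by ring
        _ = (K : ℝ) * dist X Y := by rw [h3]; rfl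
    have hN' : ∀ τ ∈ Ioc t t₀, HasDerivWithinAt N (v τ (N τ)) (Iic τ) τ :=
      fun τ hτ => (hN τ (mem_Iic.mpr hτ.2)).mono (Iic_subset_Iic.mpr hτ.2)
    have hM' : ∀ τ ∈ Ioc t t₀, HasDerivWithinAt M (v τ (M τ)) (Iic τ) τ :=
      fun τ hτ => (hM τ (mem_Iic.mpr hτ.2)).mono (Iic_subset_Iic.mpr hτ.2)
    have hNs : ∀ τ ∈ Ioc t t₀, N τ ∈ Metric.closedBall (0 : Matrix (Fin d) (Fin d) ℝ) ρ := by
      intro τ hτ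
      rw [mem_closedBall_zero_iff]
      exact le_trans (hcN τ ⟨hτ.1.le, hτ.2⟩) (le_trans (le_max_right cM cN) (le_max_left _ _))
    have hMs : ∀ τ ∈ Ioc t t₀, M τ ∈ Metric.closedBall (0 : Matrix (Fin d) (Fin d) ℝ) ρ := by
      intro τ hτ
      rw [mem_closedBall_zero_iff]
      exact le_trans (hcM τ ⟨hτ.1.le, hτ.2⟩) (le_trans (le_max_left cM cN) (le_max_left _ _))
    have hEq := ODE_solution_unique_of_mem_Icc_left (fun τ _ => hlip τ) hNc hN' hNs hMc hM' hMs hinit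
    exact hEq ⟨le_refl t, hlt.le⟩


/-- Existence, uniqueness and asymptotics for the matrix Riccati problem
`M' + M² + Q = 0`, `M t₀ = (1/t₀) • 1` on `(-∞, t₀]`, for a continuous symmetric
`Q` decaying like `(1+|t|)^{-μ-2}` with `μ > 1`. -/
theorem stmt_1 (d : ℕ) (hd : 1 ≤ d) (μ C : ℝ) (hμ : 1 < μ) (hC : 0 < C)
    (Q : ℝ → Matrix (Fin d) (Fin d) ℝ) (hQc : Continuous Q)
    (hQsym : ∀ t, (Q t).IsSymm)
    (hQbound : ∀ t : ℝ, ‖Q t‖ ≤ C * (1 + |t|) ^ (-μ - 2)) :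
    ∃ t₀ : ℝ, t₀ < 0 ∧ ∃ M : ℝ → Matrix (Fin d) (Fin d) ℝ,
      (∀ t ∈ Set.Iic t₀, HasDerivWithinAt M (-(M t * M t + Q t)) (Set.Iic t₀) t) ∧
      M t₀ = (1/t₀) • (1 : Matrix (Fin d) (Fin d) ℝ) ∧
      (∀ t ∈ Set.Iic t₀, (M t).IsSymm) ∧
      (∃ C' : ℝ, ∀ t ∈ Set.Iic t₀,
        ‖M t - (1/t) • (1 : Matrix (Fin d) (Fin d) ℝ)‖ ≤ C' / t ^ 2) ∧
      (∀ N : ℝ → Matrix (Fin d) (Fin d) ℝ,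
        (∀ t ∈ Set.Iic t₀, HasDerivWithinAt N (-(N t * N t + Q t)) (Set.Iic t₀) t) →
        N t₀ = (1/t₀) • (1 : Matrix (Fin d) (Fin d) ℝ) →
        ∀ t ∈ Set.Iic t₀, N t = M t) := by
  obtain ⟨t₀, ht₀, h14, hhalf⟩ := exists_t0 d hd μ C hμ hC
  obtain ⟨S, hScont, hSb, hSsym, hSeq⟩ :=
    exists_S d hd μ C hμ hC Q hQc hQsym hQbound t₀ ht₀ h14 hhalf
  set gS : ℝ → Matrix (Fin d) (Fin d) ℝ :=
    fun s => ((min s t₀)^2)⁻¹ • (S s * S s) + s^2 • Q s with hgS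
  have hminne : ∀ s : ℝ, ((min s t₀)^2) ≠ 0 := fun s =>
    pow_ne_zero 2 (ne_of_lt (lt_of_le_of_lt (min_le_right s t₀) ht₀))
  have hgScont : Continuous gS := by
    apply Continuous.add
    · exact (((continuous_id.min continuous_const).pow 2).inv₀ hminne).smul
        (hScont.matrix_mul hScont)
    · exact (continuous_pow 2).smul hQc
  set M : ℝ → Matrix (Fin d) (Fin d) ℝ :=
    fun t => (1/t) • (1 : Matrix (Fin d) (Fin d) ℝ) + (t^2)⁻¹ • S t with hM
  have hMt₀ : M t₀ = (1/t₀) • (1 : Matrix (Fin d) (Fin d) ℝ) := by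
    have h0 : S t₀ = 0 := by rw [hSeq t₀, min_self, integral_same]
    simp only [hM, h0, smul_zero, add_zero]
  have hMd : ∀ t ∈ Iic t₀, HasDerivWithinAt M (-(M t * M t + Q t)) (Iic t₀) t := by
    intro t htt
    rw [mem_Iic] at htt
    have htneg : t < 0 := lt_of_le_of_lt htt ht₀
    have ht0 : t ≠ 0 := ne_of_lt htneg
    have hP : HasDerivAt (fun u => ∫ s in t₀..u, gS s) (gS t) t :=
      (hgScont.integral_hasStrictDerivAt t₀ t).hasDerivAt
    have hS' : HasDerivWithinAt S (-(gS t)) (Iic t₀) t := by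
      have h1 : HasDerivWithinAt (fun u => -(∫ s in t₀..u, gS s)) (-(gS t)) (Iic t₀) t :=
        (hP.neg).hasDerivWithinAt
      apply h1.congr
      · intro u hu
        rw [hSeq u, min_eq_left (mem_Iic.mp hu)]
        exact integral_symm t₀ u
      · rw [hSeq t, min_eq_left htt]
        exact integral_symm t₀ t
    have hA : HasDerivAt (fun u : ℝ => (1/u) • (1 : Matrix (Fin d) (Fin d) ℝ))
        ((-(t^2)⁻¹) • (1 : Matrix (Fin d) (Fin d) ℝ)) t := by
      have := (hasDerivAt_inv ht0).smul_const (1 : Matrix (Fin d) (Fin d) ℝ)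
      simp only [one_div]; exact this
    have hsc := (hasDerivAt_pow 2 t).inv (pow_ne_zero 2 ht0)
    have hB := hsc.hasDerivWithinAt.smul hS'
    have hsum := hA.hasDerivWithinAt.add hB
    have hgt : gS t = (t^2)⁻¹ • (S t * S t) + t^2 • Q t := by
      rw [hgS]; simp only; rw [min_eq_left htt]
    refine HasDerivWithinAt.congr_deriv hsum ?_
    symm
    simp only [hM, hgt, Pi.inv_apply]
    have hexp : ((1/t) • (1 : Matrix (Fin d) (Fin d) ℝ) + (t^2)⁻¹ • S t) *
        ((1/t) • (1 : Matrix (Fin d) (Fin d) ℝ) + (t^2)⁻¹ • S t)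
        = ((1/t)*(1/t)) • (1 : Matrix (Fin d) (Fin d) ℝ)
          + ((1/t)*(t^2)⁻¹ + (t^2)⁻¹*(1/t)) • S t
          + ((t^2)⁻¹*(t^2)⁻¹) • (S t * S t) := by
      simp only [add_mul, mul_add, smul_mul_assoc, mul_smul_comm, smul_smul,
        one_mul, mul_one, add_smul]
      module
    rw [hexp]
    match_scalars <;> field_simp <;> ring
  refine ⟨t₀, ht₀, M, hMd, hMt₀, ?_, ?_, ?_⟩
  · intro t _
    apply Matrix.IsSymm.add
    · exact Matrix.isSymm_one.smul _
    · exact (hSsym t).smul _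
  · refine ⟨1, fun t htt => ?_⟩
    have hbd : ‖M t - (1/t) • (1 : Matrix (Fin d) (Fin d) ℝ)‖ = ‖(t^2)⁻¹ • S t‖ := by
      simp only [hM, add_sub_cancel_left]
    rw [hbd, norm_smul, Real.norm_eq_abs, abs_of_nonneg (by positivity)]
    calc (t^2)⁻¹ * ‖S t‖ ≤ (t^2)⁻¹ * 1 :=
          mul_le_mul_of_nonneg_left (hSb t) (by positivity)
      _ = 1 / t^2 := by rw [mul_one, one_div]
  · intro N hN hNinit
    exact riccati_unique d Q t₀ M N hMd hN (by rw [hNinit, hMt₀])
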